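/- Every proper surjective homomorphic image of a subcomplete digraph is a partial subcomplete digraph; in particular the family {N⃗_{2k,k} : k ≥ 1} of proper subcomplete digraphs is an infinite antichain under both the standard and strong surjective homomorphism orderings. -/

import Mathlib

/-- A finite structure with a single binary relation (digraph/graph model). -/
structure FinBinRel where
  n : ℕ
  rel : Fin n → Fin n → Prop

/-- `f` is a homomorphism from `A` to `B`: it maps related pairs to related pairs. -/
def IsHom (A B : FinBinRel) (f : Fin A.n → Fin B.n) : Prop :=
  ∀ x y, A.rel x y → B.rel (f x) (f y)

/-- `f` is a strong homomorphism: a homomorphism such that every related pair of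
elements of the image is the image of a related pair. -/
def IsStrongHom (A B : FinBinRel) (f : Fin A.n → Fin B.n) : Prop :=
  IsHom A B f ∧
    ∀ p q : Fin B.n, B.rel p q → (∃ a, f a = p) → (∃ b, f b = q) →
      ∃ u v, A.rel u v ∧ f u = p ∧ f v = q

/-- Homomorphic image ordering: `A ⪯ B` iff there is a surjective homomorphism `B → A`. -/
def HomLe (A B : FinBinRel) : Prop :=
  ∃ f : Fin B.n → Fin A.n, Function.Surjective f ∧ IsHom B A f

/-- Strong homomorphic image ordering: `A ⪯ B` iff there is a surjective strong
homomorphism `B → A`. -/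
def StrongLe (A B : FinBinRel) : Prop :=
  ∃ f : Fin B.n → Fin A.n, Function.Surjective f ∧ IsStrongHom B A f

/-- Isomorphism of binary relational structures. -/
def BinIso (A B : FinBinRel) : Prop :=
  ∃ e : Fin A.n ≃ Fin B.n, ∀ x y, A.rel x y ↔ B.rel (e x) (e y)

/-- A class `C` is well quasi-ordered by `r`: every infinite sequence of members of `C`
contains a "good pair". (For orderings on finite structures respecting size this is
equivalent to having no infinite antichain.) -/
def IsWqo (r : FinBinRel → FinBinRel → Prop) (C : Set FinBinRel) : Prop :=
  ∀ f : ℕ → FinBinRel, (∀ i, f i ∈ C) → ∃ i j, i < j ∧ r (f i) (f j)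

/-- A reflexive graph: symmetric relation with a loop at every vertex. -/
def ReflGraph (A : FinBinRel) : Prop :=
  (∀ x, A.rel x x) ∧ (∀ x y, A.rel x y → A.rel y x)

/-- An irreflexive graph: symmetric and loopless. -/
def IrrGraph (A : FinBinRel) : Prop :=
  (∀ x, ¬ A.rel x x) ∧ (∀ x y, A.rel x y → A.rel y x)

/-- The irreflexive complete graph on `n` vertices. -/
def Kirr (n : ℕ) : FinBinRel := ⟨n, fun i j => i ≠ j⟩

/-- The complete reflexive graph/digraph on `n` vertices (all pairs, including loops). -/
def Kcompl (n : ℕ) : FinBinRel := ⟨n, fun _ _ => True⟩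

/-- The subcomplete reflexive graph `N_{n,k}` (for `2k ≤ n`): the complete reflexive
graph on `n` vertices with the `k` disjoint edges `{0,1},{2,3},…,{2k-2,2k-1}` deleted. -/
def Ngraph (n k : ℕ) : FinBinRel :=
  ⟨n, fun i j => ¬ ∃ m, m < k ∧
      ((i.val = 2 * m ∧ j.val = 2 * m + 1) ∨ (j.val = 2 * m ∧ i.val = 2 * m + 1))⟩

/-- The subcomplete digraph `N⃗_{n,k}` (for `2k ≤ n`): the complete reflexive digraph
on `n` vertices with the `k` disjoint directed edges `(0,1),(2,3),…,(2k-2,2k-1)` removed. -/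
def Ndigraph (n k : ℕ) : FinBinRel :=
  ⟨n, fun i j => ¬ ∃ m, m < k ∧ i.val = 2 * m ∧ j.val = 2 * m + 1⟩

/-- `D` has a set of `k` pairwise disjoint edges (all `2k` endpoints distinct). -/
def HasDisjointEdges (D : FinBinRel) (k : ℕ) : Prop :=
  ∃ a b : Fin k → Fin D.n,
    Function.Injective (Sum.elim a b) ∧ ∀ i, D.rel (a i) (b i)

/-- Every proper surjective homomorphic image of a subcomplete digraph is (isomorphic to)
a partial subcomplete digraph; in particular the proper subcomplete digraphs
`{N⃗_{2k,k} : k ≥ 1}` form an infinite antichain under both the standard and strong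
surjective homomorphism orderings. -/

private lemma interleave_equiv (l : ℕ) :
    ∃ ι : (Fin l ⊕ Fin l) ≃ Fin (2 * l),
      (∀ i, (ι (Sum.inl i)).val = 2 * i.val) ∧ (∀ i, (ι (Sum.inr i)).val = 2 * i.val + 1) := by
  let g : Fin l ⊕ Fin l → Fin (2 * l) :=
    Sum.elim (fun i => ⟨2 * i.val, by have := i.isLt; omega⟩)
      (fun i => ⟨2 * i.val + 1, by have := i.isLt; omega⟩)
  have hginj : Function.Injective g := by
    rintro (i | i) (j | j) h <;>
      simp only [g, Sum.elim_inl, Sum.elim_inr, Fin.mk.injEq] at h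
    · exact congrArg Sum.inl (Fin.ext (by omega))
    · omega
    · omega
    · exact congrArg Sum.inr (Fin.ext (by omega))
  have hbij : Function.Bijective g := by
    rw [Fintype.bijective_iff_injective_and_card]
    exact ⟨hginj, by simp; omega⟩
  refine ⟨Equiv.ofBijective g hbij, fun i => ?_, fun i => ?_⟩ <;> rfl

private lemma matching_iso (H : FinBinRel) (l : ℕ) (a b : Fin l → Fin H.n)
    (hinj : Function.Injective (Sum.elim a b))
    (hne : ∀ x y, ¬ H.rel x y ↔ ∃ i, a i = x ∧ b i = y) :
    BinIso H (Ndigraph H.n l) := by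
  classical
  obtain ⟨ι, hι1, hι2⟩ := interleave_equiv l
  set d : Fin l ⊕ Fin l → Fin H.n := Sum.elim a b with hd
  let R : Set (Fin H.n) := Set.range d
  let e2 : R ≃ (Fin l ⊕ Fin l) := (Equiv.ofInjective d hinj).symm
  set c := Fintype.card {x : Fin H.n // ¬ x ∈ R} with hc
  let e3 : {x : Fin H.n // ¬ x ∈ R} ≃ Fin c := Fintype.equivFin _
  have hcardR : Fintype.card R = 2 * l := by
    rw [Set.card_range_of_injective hinj]; simp; omega
  have hsum : 2 * l + c = H.n := by
    have h1 := Fintype.card_congr (Equiv.sumCompl (fun x : Fin H.n => x ∈ R))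
    rw [Fintype.card_sum, Fintype.card_fin] at h1
    have h2 : Fintype.card {a : Fin H.n // a ∈ R} = 2 * l := by
      rw [← hcardR]
    have h3 : Fintype.card {a : Fin H.n // ¬ a ∈ R} = c := by
      rw [hc]
    omega
  let E : Fin H.n ≃ Fin H.n :=
    ((Equiv.sumCompl (fun x => x ∈ R)).symm.trans
      ((Equiv.sumCongr (e2.trans ι) e3).trans
        (finSumFinEquiv.trans (finCongr hsum))))
  have hEd : ∀ s, (E (d s)).val = (ι s).val := by
    intro s
    have hmem : d s ∈ R := Set.mem_range_self s
    have he2 : e2 ⟨d s, hmem⟩ = s := by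
      rw [Equiv.symm_apply_eq]
      exact Subtype.ext rfl
    simp only [E, Equiv.trans_apply]
    rw [Equiv.sumCompl_symm_apply_of_pos hmem]
    simp only [Equiv.sumCongr_apply, Sum.map_inl, Equiv.trans_apply, he2,
      finSumFinEquiv_apply_left, finCongr_apply, Fin.coe_cast, Fin.coe_castAdd]
  have hEa : ∀ i : Fin l, (E (a i)).val = 2 * i.val := by
    intro i
    have h := hEd (Sum.inl i); rw [hι1] at h; exact h
  have hEb : ∀ i : Fin l, (E (b i)).val = 2 * i.val + 1 := by
    intro i
    have h := hEd (Sum.inr i); rw [hι2] at h; exact h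
  refine ⟨E, fun x y => ?_⟩
  constructor
  · intro hxy
    rintro ⟨m', hm', hx, hy⟩
    have hia := hEa ⟨m', hm'⟩
    have hib := hEb ⟨m', hm'⟩
    have hmm : ((⟨m', hm'⟩ : Fin l) : ℕ) = m' := rfl
    have hxa : x = a ⟨m', hm'⟩ := by
      apply E.injective; apply Fin.ext; omega
    have hyb : y = b ⟨m', hm'⟩ := by
      apply E.injective; apply Fin.ext; omega
    exact ((hne x y).mpr ⟨⟨m', hm'⟩, hxa.symm, hyb.symm⟩) hxy
  · intro h
    by_contra hxy
    obtain ⟨i, hax, hby⟩ := (hne x y).mp hxy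
    refine h ⟨i.val, i.isLt, ?_, ?_⟩
    · rw [← hax]; exact hEa i
    · rw [← hby]; exact hEb i

private lemma part1 (n k : ℕ) (hkn : 2 * k ≤ n) (H : FinBinRel)
    (f : Fin n → Fin H.n) (hsurj : Function.Surjective f)
    (hhom : IsHom (Ndigraph n k) H f) (hni : ¬ Function.Injective f) :
    ∃ m l, 2 * l < m ∧ BinIso H (Ndigraph m l) := by
  classical
  obtain ⟨i0, j0, hfe, hne0⟩ := Function.not_injective_iff.mp hni
  have hnonedge : ∀ p q : Fin H.n, ¬ H.rel p q → ∀ i j : Fin n, f i = p → f j = q →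
      ∃ m', m' < k ∧ i.val = 2 * m' ∧ j.val = 2 * m' + 1 := by
    intro p q hpq i j hi hj
    by_contra hcon
    have := hhom i j hcon
    rw [hi, hj] at this
    exact hpq this
  have hfib : ∀ p q, ¬ H.rel p q → ∃ m', m' < k ∧
      (∀ i : Fin n, f i = p ↔ i.val = 2 * m') ∧
      (∀ j : Fin n, f j = q ↔ j.val = 2 * m' + 1) := by
    intro p q hpq
    obtain ⟨i, hi⟩ := hsurj p
    obtain ⟨j, hj⟩ := hsurj q
    obtain ⟨m', hm', him, hjm⟩ := hnonedge p q hpq i j hi hj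
    refine ⟨m', hm', fun i' => ⟨fun hi' => ?_, fun hi' => ?_⟩,
      fun j' => ⟨fun hj' => ?_, fun hj' => ?_⟩⟩
    · obtain ⟨m'', _, h1, h2⟩ := hnonedge p q hpq i' j hi' hj; omega
    · rw [show i' = i from Fin.ext (by omega)]; exact hi
    · obtain ⟨m'', _, h1, h2⟩ := hnonedge p q hpq i j' hi hj'; omega
    · rw [show j' = j from Fin.ext (by omega)]; exact hj
  let v : Fin k → Fin n := fun s => ⟨2 * s.val, by have := s.isLt; omega⟩
  let w : Fin k → Fin n := fun s => ⟨2 * s.val + 1, by have := s.isLt; omega⟩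
  set S : Finset (Fin k) := Finset.univ.filter (fun s => ¬ H.rel (f (v s)) (f (w s))) with hS
  set l := S.card with hl
  let σ : Fin l ≃ S := S.equivFin.symm
  let a : Fin l → Fin H.n := fun i => f (v (σ i))
  let b : Fin l → Fin H.n := fun i => f (w (σ i))
  have memS : ∀ i : Fin l, ¬ H.rel (a i) (b i) := by
    intro i
    exact (Finset.mem_filter.mp (σ i).2).2
  have key : ∀ x y, ¬ H.rel x y ↔ ∃ i, a i = x ∧ b i = y := by
    intro x y
    constructor
    · intro hxy
      obtain ⟨m', hm', hfx, hfy⟩ := hfib x y hxy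
      have hsv : f (v ⟨m', hm'⟩) = x := (hfx _).mpr rfl
      have hsw : f (w ⟨m', hm'⟩) = y := (hfy _).mpr rfl
      have hmem : (⟨m', hm'⟩ : Fin k) ∈ S := by
        refine Finset.mem_filter.mpr ⟨Finset.mem_univ _, ?_⟩
        rw [hsv, hsw]; exact hxy
      refine ⟨σ.symm ⟨_, hmem⟩, ?_, ?_⟩
      · show f (v (σ (σ.symm ⟨_, hmem⟩))) = x
        rw [Equiv.apply_symm_apply]; exact hsv
      · show f (w (σ (σ.symm ⟨_, hmem⟩))) = y
        rw [Equiv.apply_symm_apply]; exact hsw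
    · rintro ⟨i, rfl, rfl⟩
      exact memS i
  have hvals : ∀ (i : Fin l), ((σ i : Fin k)).val < k := fun i => (σ i : Fin k).isLt
  have hinjab : Function.Injective (Sum.elim a b) := by
    have siginj : ∀ i i' : Fin l, (σ i : Fin k).val = (σ i' : Fin k).val → i = i' := by
      intro i i' h
      have : σ i = σ i' := Subtype.ext (Fin.ext h)
      exact σ.injective this
    rintro (i | i) (i' | i') h <;> simp only [Sum.elim_inl, Sum.elim_inr] at h
    · obtain ⟨m', hm', hfx, hfy⟩ := hfib (a i) (b i) (memS i)
      have h1 : (v (σ i)).val = 2 * m' := (hfx _).mp rfl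
      have h2 : (v (σ i')).val = 2 * m' := (hfx _).mp h.symm
      have h1' : 2 * (σ i : Fin k).val = 2 * m' := h1
      have h2' : 2 * (σ i' : Fin k).val = 2 * m' := h2
      exact congrArg Sum.inl (siginj i i' (by omega))
    · obtain ⟨m', hm', hfx, hfy⟩ := hfib (a i) (b i) (memS i)
      have h2 : (w (σ i')).val = 2 * m' := (hfx _).mp h.symm
      have h1 : (v (σ i)).val = 2 * m' := (hfx _).mp rfl
      have h2' : 2 * (σ i' : Fin k).val + 1 = 2 * m' := h2
      have h1' : 2 * (σ i : Fin k).val = 2 * m' := h1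
      omega
    · obtain ⟨m', hm', hfx, hfy⟩ := hfib (a i') (b i') (memS i')
      have h2 : (w (σ i)).val = 2 * m' := (hfx _).mp h
      have h1 : (v (σ i')).val = 2 * m' := (hfx _).mp rfl
      have h2' : 2 * (σ i : Fin k).val + 1 = 2 * m' := h2
      have h1' : 2 * (σ i' : Fin k).val = 2 * m' := h1
      omega
    · obtain ⟨m', hm', hfx, hfy⟩ := hfib (a i) (b i) (memS i)
      have h1 : (w (σ i)).val = 2 * m' + 1 := (hfy _).mp rfl
      have h2 : (w (σ i')).val = 2 * m' + 1 := (hfy _).mp h.symm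
      have h1' : 2 * (σ i : Fin k).val + 1 = 2 * m' + 1 := h1
      have h2' : 2 * (σ i' : Fin k).val + 1 = 2 * m' + 1 := h2
      exact congrArg Sum.inr (siginj i i' (by omega))
  have hiso : BinIso H (Ndigraph H.n l) := matching_iso H l a b hinjab key
  refine ⟨H.n, l, ?_, hiso⟩
  have hp0 : ∀ s : Fin l ⊕ Fin l, f i0 ≠ Sum.elim a b s := by
    rintro (i | i) h <;> simp only [Sum.elim_inl, Sum.elim_inr] at h
    · obtain ⟨m', hm', hfx, hfy⟩ := hfib (a i) (b i) (memS i)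
      have hi0 : i0.val = 2 * m' := (hfx i0).mp h
      have hj0 : j0.val = 2 * m' := (hfx j0).mp (by rw [← hfe]; exact h)
      exact hne0 (Fin.ext (by omega))
    · obtain ⟨m', hm', hfx, hfy⟩ := hfib (a i) (b i) (memS i)
      have hi0 : i0.val = 2 * m' + 1 := (hfy i0).mp h
      have hj0 : j0.val = 2 * m' + 1 := (hfy j0).mp (by rw [← hfe]; exact h)
      exact hne0 (Fin.ext (by omega))
  have hcard : Fintype.card (Option (Fin l ⊕ Fin l)) ≤ Fintype.card (Fin H.n) := by
    apply Fintype.card_le_of_injective (fun o => o.elim (f i0) (Sum.elim a b))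
    rintro (_ | s) (_ | t) h <;> simp only [Option.elim] at h
    · rfl
    · exact absurd h (hp0 t)
    · exact absurd h.symm (hp0 s)
    · exact congrArg some (hinjab h)
  simp only [Fintype.card_option, Fintype.card_sum, Fintype.card_fin] at hcard
  omega

private lemma no_iso (k m l : ℕ) (hml : 2 * l < m) :
    ¬ BinIso (Ndigraph (2 * k) k) (Ndigraph m l) := by
  rintro ⟨e, he⟩
  have p : Fin ((Ndigraph m l).n) := ⟨2 * l, hml⟩
  set x := e.symm ⟨2 * l, hml⟩ with hx
  have hex : e x = ⟨2 * l, hml⟩ := by rw [hx, Equiv.apply_symm_apply]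
  have hxlt : (x : Fin (2 * k)).val < 2 * k := x.isLt
  rcases Nat.even_or_odd x.val with ⟨m0, hm0⟩ | ⟨m0, hm0⟩
  · have hm0k : m0 < k := by omega
    set y : Fin ((Ndigraph (2 * k) k).n) := ⟨2 * m0 + 1, by show 2 * m0 + 1 < 2 * k; omega⟩
      with hy
    have hA : ¬ (Ndigraph (2 * k) k).rel x y :=
      not_not.mpr ⟨m0, hm0k, by omega, rfl⟩
    have hB : ¬ (Ndigraph m l).rel (e x) (e y) := fun hrel => hA ((he x y).mpr hrel)
    obtain ⟨m', hm', h1, h2⟩ := not_not.mp hB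
    rw [hex] at h1
    have h1' : 2 * l = 2 * m' := h1
    omega
  · have hm0k : m0 < k := by omega
    set y : Fin ((Ndigraph (2 * k) k).n) := ⟨2 * m0, by show 2 * m0 < 2 * k; omega⟩ with hy
    have hA : ¬ (Ndigraph (2 * k) k).rel y x :=
      not_not.mpr ⟨m0, hm0k, rfl, by omega⟩
    have hB : ¬ (Ndigraph m l).rel (e y) (e x) := fun hrel => hA ((he y x).mpr hrel)
    obtain ⟨m', hm', h1, h2⟩ := not_not.mp hB
    rw [hex] at h2
    have h2' : 2 * l = 2 * m' + 1 := h2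
    omega

theorem stmt_14 :
    (∀ n k : ℕ, 2 * k ≤ n → ∀ H : FinBinRel,
      ∀ f : Fin n → Fin H.n, Function.Surjective f → IsHom (Ndigraph n k) H f →
        ¬ Function.Injective f → ∃ m l, 2 * l < m ∧ BinIso H (Ndigraph m l)) ∧
    ({D | ∃ k, 1 ≤ k ∧ D = Ndigraph (2 * k) k} : Set FinBinRel).Infinite ∧
    (∀ k l : ℕ, 1 ≤ k → 1 ≤ l → k ≠ l →
      ¬ HomLe (Ndigraph (2 * k) k) (Ndigraph (2 * l) l) ∧
      ¬ StrongLe (Ndigraph (2 * k) k) (Ndigraph (2 * l) l)) := by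
  refine ⟨part1, ?_, ?_⟩
  · exact Set.infinite_of_injective_forall_mem
      (f := fun k : ℕ => Ndigraph (2 * (k + 1)) (k + 1))
      (fun k1 k2 h => by
        have h2 := congrArg FinBinRel.n h
        simp only [Ndigraph] at h2
        omega)
      (fun k => ⟨k + 1, by omega, rfl⟩)
  · intro k l hk hl hkl
    have main : ¬ HomLe (Ndigraph (2 * k) k) (Ndigraph (2 * l) l) := by
      rintro ⟨f, hs, hh⟩
      have e1 : (Ndigraph (2 * k) k).n = 2 * k := rfl
      have e2 : (Ndigraph (2 * l) l).n = 2 * l := rfl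
      have hcard : (2 : ℕ) * k ≤ 2 * l := by
        have h := Fintype.card_le_of_surjective f hs
        simp only [Fintype.card_fin] at h
        rw [e1, e2] at h
        exact h
      have hnotinj : ¬ Function.Injective f := by
        intro hinj
        have h := Fintype.card_le_of_injective f hinj
        simp only [Fintype.card_fin] at h
        rw [e1, e2] at h
        omega
      obtain ⟨m, l', hml, hiso⟩ := part1 (2 * l) l le_rfl (Ndigraph (2 * k) k) f hs hh hnotinj
      exact no_iso k m l' hml hiso
    exact ⟨main, fun ⟨f, hs, hsh⟩ => main ⟨f, hs, hsh.1⟩⟩
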